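/- Any star tree with m leaves embeds isometrically (up to scale) in the Poincaré disk: for any m ≥ 2 and any D > 0, there exist points x₁, …, x_m in the Poincaré disk (unit radius) such that d_D(0, x_i) = D for all i and d_D(x_i, x_j) ≥ 2D − C for all i ≠ j, where C is a constant depending only on m (not on D). -/

import Mathlib

set_option maxHeartbeats 1000000

noncomputable def artanh (x : ℝ) : ℝ := (1 / 2) * Real.log ((1 + x) / (1 - x))

noncomputable def mobiusAdd (r : ℝ) {n : ℕ} (a b : EuclideanSpace ℝ (Fin n)) :
    EuclideanSpace ℝ (Fin n) :=
  (1 / (1 + 2 * (inner ℝ a b : ℝ) / r ^ 2 + ‖a‖ ^ 2 * ‖b‖ ^ 2 / r ^ 4)) •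
    ((1 + 2 * (inner ℝ a b : ℝ) / r ^ 2 + ‖b‖ ^ 2 / r ^ 2) • a + (1 - ‖a‖ ^ 2 / r ^ 2) • b)

noncomputable def pDist (r : ℝ) {n : ℕ} (p q : EuclideanSpace ℝ (Fin n)) : ℝ :=
  2 * r * artanh (‖mobiusAdd r (-p) q‖ / r)

open Real
open scoped RealInnerProductSpace

noncomputable def uvec (θ : ℝ) : EuclideanSpace ℝ (Fin 2) :=
  WithLp.toLp 2 (fun k : Fin 2 => if k = 0 then Real.cos θ else Real.sin θ)

lemma inner_uvec (θ φ : ℝ) : ⟪uvec θ, uvec φ⟫ = Real.cos (θ - φ) := by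
  simp [uvec, PiLp.inner_apply, RCLike.inner_apply, Fin.sum_univ_two, Real.cos_sub]
  ring

lemma norm_uvec (θ : ℝ) : ‖uvec θ‖ = 1 := by
  have h := inner_uvec θ θ
  rw [sub_self, Real.cos_zero, real_inner_self_eq_norm_sq] at h
  nlinarith [norm_nonneg (uvec θ)]

lemma mobius_zero (q : EuclideanSpace ℝ (Fin 2)) : mobiusAdd 1 (-0) q = q := by
  simp [mobiusAdd]

lemma key_norm (t c : ℝ) (ht0 : 0 ≤ t) (ht1 : t < 1) (hc : c ≤ 1)
    (u w : EuclideanSpace ℝ (Fin 2)) (hu : ‖u‖ = 1) (hw : ‖w‖ = 1) (huw : ⟪u, w⟫ = c) :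
    ‖mobiusAdd 1 (-(t • u)) (t • w)‖ ^ 2 = 1 - (1 - t ^ 2) ^ 2 / (1 - 2 * t ^ 2 * c + t ^ 4) := by
  have h1t : (0:ℝ) < 1 - t ^ 2 := by nlinarith
  have hden : (0:ℝ) < 1 - 2 * t ^ 2 * c + t ^ 4 := by
    nlinarith [mul_pos h1t h1t, mul_nonneg (sq_nonneg t) (sub_nonneg.2 hc)]
  have hnu : ‖t • u‖ = t := by rw [norm_smul, hu]; simp [abs_of_nonneg ht0]
  have hnw : ‖t • w‖ = t := by rw [norm_smul, hw]; simp [abs_of_nonneg ht0]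
  have hin : ⟪-(t • u), t • w⟫ = -(t ^ 2 * c) := by
    rw [inner_neg_left, real_inner_smul_left, real_inner_smul_right, huw]; ring
  set den := 1 - 2 * t ^ 2 * c + t ^ 4 with hdendef
  set α := 1 - 2 * t ^ 2 * c + t ^ 2 with hα
  set β := 1 - t ^ 2 with hβ
  have hM : mobiusAdd 1 (-(t • u)) (t • w)
      = (1 / den * (-(α * t))) • u + (1 / den * (β * t)) • w := by
    rw [mobiusAdd, hin, norm_neg, hnu, hnw]
    have e1 : (1 + 2 * -(t ^ 2 * c) / 1 ^ 2 + t ^ 2 * t ^ 2 / 1 ^ 4) = den := by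
      rw [hdendef]; ring
    have e2 : (1 + 2 * -(t ^ 2 * c) / 1 ^ 2 + t ^ 2 / 1 ^ 2) = α := by rw [hα]; ring
    have e3 : (1 - t ^ 2 / 1 ^ 2) = β := by rw [hβ]; ring
    rw [e1, e2, e3]
    module
  rw [hM, norm_add_sq_real]
  rw [norm_smul, norm_smul, hu, hw, real_inner_smul_left, real_inner_smul_right, huw]
  have habs : ∀ y : ℝ, (‖y‖ * 1) ^ 2 = y ^ 2 := by intro y; simp [sq_abs]
  rw [habs, habs]
  have hkey : (1 / den * -(α * t)) ^ 2 + 2 * (1 / den * -(α * t) * (1 / den * (β * t) * c))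
      + (1 / den * (β * t)) ^ 2 = 1 - β ^ 2 / den := by
    field_simp
    rw [hdendef, hα, hβ]
    ring
  rw [hkey]

lemma cos_bound (m k : ℕ) (hm : 2 ≤ m) (hk1 : 1 ≤ k) (hk2 : k < m) :
    Real.cos (2*π*k/m) ≤ Real.cos (2*π/m) := by
  have hm0 : (0:ℝ) < m := by exact_mod_cast Nat.lt_of_lt_of_le (by norm_num) hm
  have hπ := Real.pi_pos
  have main : ∀ j : ℕ, 1 ≤ j → 2*j ≤ m → Real.cos (2*π*j/m) ≤ Real.cos (2*π/m) := by
    intro j hj1 hj2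
    have hj1' : (1:ℝ) ≤ j := by exact_mod_cast hj1
    have hj2' : (2*j:ℝ) ≤ m := by exact_mod_cast hj2
    apply Real.cos_le_cos_of_nonneg_of_le_pi
    · positivity
    · rw [div_le_iff₀ hm0]; nlinarith
    · rw [div_le_div_iff₀ hm0 hm0]
      nlinarith [mul_nonneg (mul_nonneg (sub_nonneg.2 hj1') hm0.le) hπ.le]
  rcases le_or_gt (2*k) m with h | h
  · exact main k hk1 h
  · have hkm : k ≤ m := le_of_lt hk2
    have hcast : ((m - k : ℕ) : ℝ) = m - k := by push_cast [hkm]; ring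
    have heq : 2*π*k/m = 2*π - 2*π*(↑(m-k))/m := by rw [hcast]; field_simp; ring
    rw [heq, Real.cos_two_pi_sub]
    exact main (m-k) (by omega) (by omega)

theorem star_tree_embeds_in_poincare_disk :
    ∀ m : ℕ, 2 ≤ m → ∃ C : ℝ, ∀ D : ℝ, 0 < D →
      ∃ x : Fin m → EuclideanSpace ℝ (Fin 2),
        (∀ i, pDist 1 0 (x i) = D) ∧
        (∀ i j, i ≠ j → 2 * D - C ≤ pDist 1 (x i) (x j)) := by
  intro m hm
  have hπ := Real.pi_pos
  have hm0 : (0:ℝ) < m := by exact_mod_cast Nat.lt_of_lt_of_le (by norm_num) hm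
  have hm2 : (2:ℝ) ≤ m := by exact_mod_cast hm
  set c₀ := Real.cos (2*π/m) with hc₀def
  have hc₀lt : c₀ < 1 := by
    have h1 : Real.cos (2*π/m) < Real.cos 0 := by
      apply Real.cos_lt_cos_of_nonneg_of_le_pi le_rfl
      · rw [div_le_iff₀ hm0]; nlinarith
      · positivity
    simpa using h1
  set δ := min (1/4 : ℝ) (1 - c₀) with hδdef
  have hδ0 : 0 < δ := lt_min (by norm_num) (by linarith)
  have hδ4 : δ ≤ 1/4 := min_le_left _ _
  have hδc : δ ≤ 1 - c₀ := min_le_right _ _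
  refine ⟨Real.log (16/δ), ?_⟩
  intro D hD
  set t := (Real.exp D - 1)/(Real.exp D + 1) with htdef
  have hE : 1 < Real.exp D := Real.one_lt_exp_iff.mpr hD
  have hE0 : (0:ℝ) < Real.exp D + 1 := by positivity
  have ht0 : 0 < t := div_pos (by linarith) hE0
  have ht1 : t < 1 := by rw [htdef, div_lt_one hE0]; linarith
  have h1t : 0 < 1 - t := by linarith
  have h1t' : 0 < 1 + t := by linarith
  have h1t2 : 0 < 1 - t^2 := by nlinarith
  have hratio : (1+t)/(1-t) = Real.exp D := by
    rw [htdef]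
    rw [div_eq_iff (by rw [htdef] at h1t; exact h1t.ne')]
    field_simp
    ring
  have hDlog : Real.log ((1+t)/(1-t)) = D := by rw [hratio, Real.log_exp]
  have hart : _root_.artanh t = D/2 := by rw [_root_.artanh, hratio, Real.log_exp]; ring
  clear_value t
  refine ⟨fun i => t • uvec (2*π*(i.val:ℝ)/m), ?_, ?_⟩
  · intro i
    show pDist 1 0 (t • uvec (2*π*(i.val:ℝ)/m)) = D
    rw [pDist, mobius_zero, norm_smul, norm_uvec]
    simp only [mul_one, one_mul, div_one]
    rw [Real.norm_eq_abs, abs_of_nonneg ht0.le, hart]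
    ring
  · intro i j hij
    show 2 * D - Real.log (16/δ) ≤
      pDist 1 (t • uvec (2*π*(i.val:ℝ)/m)) (t • uvec (2*π*(j.val:ℝ)/m))
    set c := Real.cos (2*π*(i.val:ℝ)/m - 2*π*(j.val:ℝ)/m) with hcdef
    have hab : (i:ℕ) ≠ (j:ℕ) := fun h => hij (Fin.val_injective h)
    have hcc₀ : c ≤ c₀ := by
      rcases Nat.lt_or_ge i.val j.val with h | h
      · have heq : (2*π*(i.val:ℝ)/m - 2*π*(j.val:ℝ)/m)
            = -(2*π*((j.val - i.val : ℕ):ℝ)/m) := by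
          rw [Nat.cast_sub h.le]; ring
        rw [hcdef, heq, Real.cos_neg]
        exact cos_bound m _ hm (by omega) (by omega)
      · have h' : j.val < i.val := lt_of_le_of_ne h (Ne.symm hab)
        have heq : (2*π*(i.val:ℝ)/m - 2*π*(j.val:ℝ)/m)
            = 2*π*((i.val - j.val : ℕ):ℝ)/m := by
          rw [Nat.cast_sub h'.le]; ring
        rw [hcdef, heq]
        exact cos_bound m _ hm (by omega) (by omega)
    have hc1 : c ≤ 1 := Real.cos_le_one _
    clear_value c
    have hinner : ⟪uvec (2*π*(i.val:ℝ)/m), uvec (2*π*(j.val:ℝ)/m)⟫ = c := by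
      rw [hcdef]; exact inner_uvec _ _
    have hkey := key_norm t c ht0.le ht1 hc1 _ _ (norm_uvec _) (norm_uvec _) hinner
    set den := 1 - 2*t^2*c + t^4 with hdendef
    clear_value den
    have hden0 : 0 < den := by
      nlinarith [mul_pos h1t2 h1t2, mul_nonneg (sq_nonneg t) (sub_nonneg.2 hc1)]
    have hdenδ : δ ≤ den := by
      rcases le_or_gt (t^2) (1/2) with h | h
      · nlinarith [mul_nonneg (sq_nonneg t) (sub_nonneg.2 hc1)]
      · nlinarith [mul_nonneg (sq_nonneg t) (sub_nonneg.2 hcc₀),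
          mul_nonneg (by linarith : (0:ℝ) ≤ 2*t^2 - 1) (by linarith : (0:ℝ) ≤ 1 - c₀),
          sq_nonneg (1 - t^2)]
    set s := ‖mobiusAdd 1 (-(t • uvec (2*π*(i.val:ℝ)/m))) (t • uvec (2*π*(j.val:ℝ)/m))‖
      with hsdef
    have hs0 : 0 ≤ s := norm_nonneg _
    have hs2 : s^2 = 1 - (1-t^2)^2/den := hkey
    have hfrac : 0 < (1-t^2)^2/den := by positivity
    have hs2lt : s^2 < 1 := by rw [hs2]; linarith
    have hs1 : s < 1 := by nlinarith
    have h1ms : 0 < 1 - s := by linarith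
    have h16 : (1+t)^4 ≤ 16 := by nlinarith
    -- step a
    have stepa : ((1+t)/(1-t))^2 * (δ/16) ≤ den/(1-t^2)^2 := by
      have e : ((1+t)/(1-t))^2 * (δ/16) = ((1+t)^2*δ)/((1-t)^2*16) := by
        rw [div_pow, div_mul_div_comm]
      rw [e, div_le_div_iff₀ (by positivity) (by positivity)]
      have key2 : δ*(1+t)^4 ≤ 16*den := by
        nlinarith [mul_le_mul_of_nonneg_left h16 hδ0.le]
      nlinarith [mul_le_mul_of_nonneg_right key2 (sq_nonneg (1-t))]
    -- step b
    have h1ms2 : 1 - s^2 = (1-t^2)^2/den := by rw [hs2]; ring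
    have hs2pos : 0 < 1 - s^2 := by rw [h1ms2]; positivity
    have stepb : den/(1-t^2)^2 ≤ (1+s)/(1-s) := by
      have e2 : den/(1-t^2)^2 = 1/(1-s^2) := by
        rw [h1ms2, one_div_div]
      rw [e2, div_le_div_iff₀ hs2pos h1ms]
      nlinarith
    have hargpos : (0:ℝ) < ((1+t)/(1-t))^2 * (δ/16) := by positivity
    have hchain : Real.log (((1+t)/(1-t))^2 * (δ/16)) ≤ Real.log ((1+s)/(1-s)) :=
      Real.log_le_log hargpos (le_trans stepa stepb)
    have hlhs : Real.log (((1+t)/(1-t))^2 * (δ/16)) = 2*D - Real.log (16/δ) := by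
      rw [Real.log_mul (by positivity) (by positivity), Real.log_pow, hDlog,
        Real.log_div hδ0.ne' (by norm_num), Real.log_div (by norm_num) hδ0.ne']
      push_cast
      ring
    rw [pDist]
    simp only [mul_one, one_mul, div_one]
    rw [← hsdef, _root_.artanh]
    calc 2 * D - Real.log (16/δ) = Real.log (((1+t)/(1-t))^2 * (δ/16)) := hlhs.symm
      _ ≤ Real.log ((1+s)/(1-s)) := hchain
      _ = 2 * (1/2 * Real.log ((1+s)/(1-s))) := by ring
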